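/- Let 1 ≤ p < ∞ and let w be a log-convex weight on [0, ∞). If the differentiation operator is bounded on H_w^p(ℂ), then there is C > 0 with log w(r) ≤ C r for all r ≥ 1. -/

import Mathlib

open Complex MeasureTheory Real Set Filter
open scoped ENNReal Topology

noncomputable section

/-- The domain: disk of radius `rmax` (`rmax = 1` is the unit disk, `rmax = ⊤` is ℂ). -/
def Dom (rmax : ℝ≥0∞) : Set ℂ := {z : ℂ | ENNReal.ofReal ‖z‖ < rmax}

/-- The integral mean `M_p(f, r)` for `0 < p < ∞`. -/
def Mp (p : ℝ) (f : ℂ → ℂ) (r : ℝ) : ℝ :=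
  ((1 / (2 * π)) * ∫ θ in (0:ℝ)..(2 * π), ‖f ((r : ℂ) * Complex.exp ((θ : ℂ) * Complex.I))‖ ^ p)
    ^ (1 / p)

/-- The sup mean `M_∞(f, r)`. -/
def Minf (f : ℂ → ℂ) (r : ℝ) : ℝ :=
  ⨆ θ : ℝ, ‖f ((r : ℂ) * Complex.exp ((θ : ℂ) * Complex.I))‖

/-- A weight on `[0, rmax)`: positive, non-decreasing, continuous, unbounded. -/
structure IsWeight (rmax : ℝ≥0∞) (w : ℝ → ℝ) : Prop where
  pos : ∀ r, 0 ≤ r → ENNReal.ofReal r < rmax → 0 < w r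
  mono : ∀ r s, 0 ≤ r → r ≤ s → ENNReal.ofReal s < rmax → w r ≤ w s
  cont : ContinuousOn w {r : ℝ | 0 ≤ r ∧ ENNReal.ofReal r < rmax}
  unbdd : ∀ M : ℝ, ∃ r, 0 ≤ r ∧ ENNReal.ofReal r < rmax ∧ M < w r

/-- `log w(e^x)` is convex on the appropriate interval. -/
def LogConvexOn (rmax : ℝ≥0∞) (w : ℝ → ℝ) : Prop :=
  ConvexOn ℝ {x : ℝ | ENNReal.ofReal (Real.exp x) < rmax}
    (fun x => Real.log (w (Real.exp x)))

/-- The integration operator `J f(z) = ∫₀^z f(ζ) dζ` (along the segment from 0 to z). -/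
def Jop (f : ℂ → ℂ) (z : ℂ) : ℂ := ∫ t in (0:ℝ)..1, z * f ((t : ℂ) * z)

/-- The associated weight `w̃` (for `p = ∞`). -/
def assocInf (rmax : ℝ≥0∞) (w : ℝ → ℝ) (t : ℝ) : ℝ :=
  sSup {m : ℝ | ∃ f : ℂ → ℂ, DifferentiableOn ℂ f (Dom rmax) ∧
    (∀ r, 0 ≤ r → ENNReal.ofReal r < rmax → Minf f r ≤ w r) ∧ m = Minf f t}

/-- The `p`-associated weight `w̃_p` for `0 < p < ∞`. -/
def assocP (rmax : ℝ≥0∞) (p : ℝ) (w : ℝ → ℝ) (t : ℝ) : ℝ :=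
  sSup {m : ℝ | ∃ f : ℂ → ℂ, DifferentiableOn ℂ f (Dom rmax) ∧
    (∀ r, 0 ≤ r → ENNReal.ofReal r < rmax → Mp p f r ≤ w r) ∧ m = Mp p f t}

lemma Mp_monomial (p : ℝ) (hp : 1 ≤ p) (c : ℂ) (n : ℕ) (r : ℝ) (hr : 0 ≤ r) :
    Mp p (fun z => c * z ^ n) r = ‖c‖ * r ^ n := by
  have hp0 : p ≠ 0 := by linarith
  have hπ : (0:ℝ) < π := Real.pi_pos
  have hnorm : ∀ θ : ℝ, ‖c * ((r : ℂ) * Complex.exp ((θ : ℂ) * Complex.I)) ^ n‖ = ‖c‖ * r ^ n := by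
    intro θ
    rw [norm_mul, norm_pow, norm_mul]
    have : ‖Complex.exp ((θ : ℂ) * Complex.I)‖ = 1 := Complex.norm_exp_ofReal_mul_I θ
    rw [this, Complex.norm_real, Real.norm_eq_abs, _root_.abs_of_nonneg hr, mul_one]
  unfold Mp
  have : (∫ θ in (0:ℝ)..(2 * π), ‖(fun z => c * z ^ n) ((r : ℂ) * Complex.exp ((θ : ℂ) * Complex.I))‖ ^ p)
      = (2 * π) * (‖c‖ * r ^ n) ^ p := by
    have : ∀ θ : ℝ, ‖(fun z => c * z ^ n) ((r : ℂ) * Complex.exp ((θ : ℂ) * Complex.I))‖ ^ p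
        = (‖c‖ * r ^ n) ^ p := fun θ => by rw [hnorm θ]
    rw [intervalIntegral.integral_congr (fun θ _ => this θ), intervalIntegral.integral_const]
    simp [smul_eq_mul]
  rw [this]
  have h2π : (2 * π) ≠ 0 := by positivity
  rw [← mul_assoc, one_div, inv_mul_cancel₀ h2π, one_mul]
  have hb : (0:ℝ) ≤ ‖c‖ * r ^ n := by positivity
  rw [← Real.rpow_mul hb, mul_one_div_cancel hp0, Real.rpow_one]

lemma core (φ : ℝ → ℝ) (hconv : ConvexOn ℝ Set.univ φ) (hmono : Monotone φ)
    (hbb : ∀ n : ℕ, BddBelow (Set.range (fun y => φ y - (n:ℝ) * y)))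
    (K : ℝ) (hK : 0 < K)
    (hder : ∀ n : ℕ, 1 ≤ n → ∀ c : ℝ, (∀ y, c ≤ φ y - (n:ℝ) * y) →
      ∀ y, Real.log n + c + ((n:ℝ)-1) * y ≤ Real.log K + φ y) :
    ∃ C > 0, ∀ x, 0 ≤ x → φ x ≤ C * Real.exp x := by
  have stepA : ∀ x : ℝ, φ (x+1) - φ x ≤ K * Real.exp (x + 3) + 1 := by
    intro x
    have hKe : 0 < K * Real.exp (x+3) := by positivity
    set t := φ (x+2) - φ (x+1) with ht
    have hst : φ (x+1) - φ x ≤ t := by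
      have h := hconv.slope_mono_adjacent (Set.mem_univ x) (Set.mem_univ (x+2))
        (by linarith : x < x+1) (by linarith : x+1 < x+2)
      rw [show x+1-x = 1 by ring, show x+2-(x+1) = 1 by ring, div_one, div_one] at h
      linarith
    by_cases h1 : t < 1
    · linarith
    push_neg at h1
    set n : ℕ := ⌊t⌋₊ with hn
    have hn1 : 1 ≤ n := Nat.le_floor (by exact_mod_cast h1)
    have hnt : (n:ℝ) ≤ t := Nat.floor_le (by linarith)
    have htn : t < (n:ℝ) + 1 := Nat.lt_floor_add_one t
    set g := fun y => φ y - (n:ℝ) * y with hg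
    set a := sInf (Set.range g) with ha
    have hale : ∀ y, a ≤ g y := fun y => csInf_le (hbb n) ⟨y, rfl⟩
    obtain ⟨v, ⟨y₀, rfl⟩, hv⟩ := Real.lt_sInf_add_pos (Set.range_nonempty g) one_pos
    have hy1 : ∃ y₁, y₁ ≤ x + 2 ∧ g y₁ < a + 1 := by
      by_cases hle : y₀ ≤ x + 2
      · exact ⟨y₀, hle, hv⟩
      · push_neg at hle
        refine ⟨x+1, by linarith, ?_⟩
        have hsl := hconv.slope_mono_adjacent (Set.mem_univ (x+1)) (Set.mem_univ y₀)
          (by linarith : x+1 < x+2) hle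
        rw [show x+2-(x+1) = 1 by ring, div_one] at hsl
        have hpos : 0 < y₀ - (x+2) := by linarith
        have h2 : t * (y₀ - (x+2)) ≤ φ y₀ - φ (x+2) := (le_div_iff₀ hpos).mp hsl
        have hgle : g (x+1) ≤ g y₀ := by
          simp only [hg]
          nlinarith
        linarith
    obtain ⟨y₁, hy₁le, hy₁⟩ := hy1
    have hd := hder n hn1 a hale y₁
    have hphi : φ y₁ = g y₁ + (n:ℝ) * y₁ := by simp [hg]
    have hlogn : Real.log n ≤ Real.log K + 1 + y₁ := by
      rw [hphi] at hd; linarith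
    have hnK : (n:ℝ) ≤ K * Real.exp (x + 3) := by
      have hnpos : (0:ℝ) < n := by exact_mod_cast hn1
      have : (n:ℝ) = Real.exp (Real.log n) := (Real.exp_log hnpos).symm
      rw [this]
      calc Real.exp (Real.log n) ≤ Real.exp (Real.log K + (x + 3)) :=
            Real.exp_le_exp.2 (by linarith)
        _ = K * Real.exp (x+3) := by rw [Real.exp_add, Real.exp_log hK]
    linarith
  have e2le : (2:ℝ) ≤ Real.exp 1 := by
    have := Real.add_one_le_exp (1:ℝ); linarith
  have stepB : ∀ m : ℕ, φ m ≤ φ 0 + K * Real.exp ((m:ℝ) + 4) + m := by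
    intro m; induction m with
    | zero => simp; nlinarith [Real.exp_pos (4:ℝ)]
    | succ m ih =>
      have h := stepA (m:ℝ)
      have e1 : Real.exp ((m:ℝ) + 3) ≤ Real.exp ((m:ℝ)+4) :=
        Real.exp_le_exp.2 (by linarith)
      have e2 : 2 * Real.exp ((m:ℝ)+4) ≤ Real.exp (((m:ℝ)+1)+4) := by
        have h' : Real.exp (((m:ℝ)+1)+4) = Real.exp ((m:ℝ)+4) * Real.exp 1 := by
          rw [← Real.exp_add]; ring_nf
        rw [h']
        nlinarith [Real.exp_pos ((m:ℝ)+4)]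
      push_cast
      nlinarith [Real.exp_pos ((m:ℝ)+4)]
  refine ⟨|φ 0| + K * Real.exp 5 + 2, by positivity, ?_⟩
  intro x hx
  set m : ℕ := ⌈x⌉₊ with hm
  have hxm : x ≤ (m:ℝ) := Nat.le_ceil x
  have hmx : (m:ℝ) ≤ x + 1 := le_of_lt (Nat.ceil_lt_add_one hx)
  have h1 : φ x ≤ φ (m:ℝ) := hmono hxm
  have h2 := stepB m
  have h3 : Real.exp ((m:ℝ)+4) ≤ Real.exp 5 * Real.exp x := by
    rw [← Real.exp_add]; exact Real.exp_le_exp.2 (by linarith)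
  have hex : x + 1 ≤ Real.exp x := Real.add_one_le_exp x
  have h5 : φ 0 ≤ |φ 0| * Real.exp x := by
    have h6 : (1:ℝ) ≤ Real.exp x := by nlinarith
    nlinarith [le_abs_self (φ 0), abs_nonneg (φ 0)]
  nlinarith [Real.exp_pos x]


theorem stmt_18' (p : ℝ) (hp : 1 ≤ p) (w : ℝ → ℝ) (hw : IsWeight ⊤ w)
    (hgrowth : (fun r : ℝ => Real.log r) =o[atTop] (fun r => Real.log (w r)))
    (hlc : LogConvexOn ⊤ w)
    (K : ℝ)
    (hbdd : ∀ f : ℂ → ℂ, Differentiable ℂ f →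
      (∀ r, 0 ≤ r → Mp p f r ≤ w r) →
      ∀ r, 0 ≤ r → Mp p (deriv f) r ≤ K * w r) :
    ∃ C > 0, ∀ r : ℝ, 1 ≤ r → Real.log (w r) ≤ C * r := by
  have wpos : ∀ r : ℝ, 0 ≤ r → 0 < w r := fun r hr => hw.pos r hr (by simp)
  set φ : ℝ → ℝ := fun x => Real.log (w (Real.exp x)) with hφ
  have hconv : ConvexOn ℝ Set.univ φ := by
    have h : ConvexOn ℝ {x : ℝ | ENNReal.ofReal (Real.exp x) < ⊤}
        (fun x => Real.log (w (Real.exp x))) := hlc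
    have hs : {x : ℝ | ENNReal.ofReal (Real.exp x) < ⊤} = Set.univ := by
      ext x; simp [ENNReal.ofReal_lt_top]
    rwa [hs] at h
  have hmono : Monotone φ := by
    intro x y hxy
    exact Real.log_le_log (wpos _ (Real.exp_pos x).le)
      (hw.mono _ _ (Real.exp_pos x).le (Real.exp_le_exp.2 hxy) (by simp))
  have hpoly : ∀ n : ℕ, ∃ Y : ℝ, ∀ y, Y ≤ y → ((n:ℝ)+1) * y ≤ φ y := by
    intro n
    have hcn : (0:ℝ) < 1/((n:ℝ)+1) := by positivity
    have h1 := Asymptotics.isLittleO_iff.mp hgrowth hcn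
    obtain ⟨R₀, hR₀⟩ := Filter.eventually_atTop.mp h1
    obtain ⟨r₁, hr₁0, -, hr₁⟩ := hw.unbdd (Real.exp 1)
    set R : ℝ := max R₀ (max r₁ 1) with hR
    have hR1 : (1:ℝ) ≤ R := le_max_of_le_right (le_max_right _ _)
    refine ⟨Real.log R, ?_⟩
    intro y hy
    set r := Real.exp y with hr
    have hrR : R ≤ r := by
      calc R = Real.exp (Real.log R) := (Real.exp_log (by linarith)).symm
        _ ≤ r := Real.exp_le_exp.2 hy
    have h2 := hR₀ r (le_trans (le_max_left _ _) hrR)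
    have hr1 : (1:ℝ) ≤ r := le_trans hR1 hrR
    have hwr : Real.exp 1 ≤ w r :=
      le_trans hr₁.le (hw.mono r₁ r hr₁0
        (le_trans ((le_max_left r₁ 1).trans (le_max_right R₀ _)) hrR) (by simp))
    have hlw : (1:ℝ) ≤ Real.log (w r) := by
      have := Real.log_le_log (Real.exp_pos 1) hwr
      rwa [Real.log_exp] at this
    rw [Real.norm_eq_abs, Real.norm_eq_abs, _root_.abs_of_nonneg (Real.log_nonneg hr1),
      _root_.abs_of_nonneg (by linarith)] at h2
    have h3 : ((n:ℝ)+1) * Real.log r ≤ Real.log (w r) := by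
      have := mul_le_mul_of_nonneg_left h2 (le_of_lt (by positivity : (0:ℝ) < (n:ℝ)+1))
      rw [← mul_assoc] at this
      rw [mul_one_div_cancel (by positivity : ((n:ℝ)+1) ≠ 0), one_mul] at this
      exact this
    have hlr : Real.log r = y := by rw [hr, Real.log_exp]
    rw [hlr] at h3
    exact h3
  have hlogw0 : ∀ y : ℝ, Real.log (w 0) ≤ φ y := fun y =>
    Real.log_le_log (wpos 0 le_rfl) (hw.mono 0 _ le_rfl (Real.exp_pos y).le (by simp))
  have hbb : ∀ n : ℕ, BddBelow (Set.range (fun y => φ y - (n:ℝ) * y)) := by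
    intro n
    obtain ⟨Y, hY⟩ := hpoly n
    set Y' := max Y 0 with hY'
    refine ⟨min Y' (Real.log (w 0) - (n:ℝ) * Y'), ?_⟩
    rintro v ⟨y, rfl⟩
    simp only
    by_cases hy : Y' ≤ y
    · have h1 := hY y (le_trans (le_max_left _ _) hy)
      have hy0 : (0:ℝ) ≤ y := le_trans (le_max_right _ _) hy
      have h2 : y ≤ φ y - (n:ℝ)*y := by nlinarith
      calc min Y' (Real.log (w 0) - (n:ℝ) * Y') ≤ Y' := min_le_left _ _
        _ ≤ y := hy
        _ ≤ φ y - (n:ℝ)*y := h2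
    · push_neg at hy
      have h1 := hlogw0 y
      have h2 : (n:ℝ)*y ≤ (n:ℝ)*Y' := mul_le_mul_of_nonneg_left hy.le (Nat.cast_nonneg n)
      calc min Y' (Real.log (w 0) - (n:ℝ) * Y') ≤ Real.log (w 0) - (n:ℝ)*Y' := min_le_right _ _
        _ ≤ φ y - (n:ℝ)*y := by linarith
  have hb2all : ∀ n : ℕ, 1 ≤ n → ∀ c : ℝ, (∀ y, c ≤ φ y - (n:ℝ) * y) →
      ∀ r, 0 ≤ r → Real.exp c * (n:ℝ) * r^(n-1) ≤ K * w r := by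
    intro n hn c hc
    set E := Real.exp c with hE
    have hEpos : 0 < E := Real.exp_pos c
    have hMpf : ∀ r, 0 ≤ r → Mp p (fun z => ((E:ℝ):ℂ) * z^n) r ≤ w r := by
      intro r hr
      rw [Mp_monomial p hp _ n r hr]
      have hEn : ‖((E:ℝ):ℂ)‖ = E := by
        rw [Complex.norm_real, Real.norm_eq_abs, abs_of_pos hEpos]
      rw [hEn]
      rcases eq_or_lt_of_le hr with h0 | h0
      · rw [← h0, zero_pow (by omega : n ≠ 0), mul_zero]
        exact (wpos 0 le_rfl).le
      · have hcy := hc (Real.log r)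
        have hphir : φ (Real.log r) = Real.log (w r) := by
          simp only [hφ]; rw [Real.exp_log h0]
        have hpow : E * r^n = Real.exp (c + (n:ℝ) * Real.log r) := by
          rw [Real.exp_add, hE]
          congr 1
          rw [show (n:ℝ) * Real.log r = ((n:ℕ):ℝ) * Real.log r by norm_num,
            Real.exp_nat_mul, Real.exp_log h0]
        rw [hpow]
        calc Real.exp (c + (n:ℝ)*Real.log r) ≤ Real.exp (φ (Real.log r)) :=
              Real.exp_le_exp.2 (by linarith)
          _ = w r := by rw [hphir, Real.exp_log (wpos r hr)]
    have hdiff : Differentiable ℂ (fun z : ℂ => ((E:ℝ):ℂ) * z^n) :=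
      (differentiable_pow n).const_mul _
    have hb := hbdd _ hdiff hMpf
    have hderiv : deriv (fun z : ℂ => ((E:ℝ):ℂ) * z^n)
        = fun z => (((E:ℝ):ℂ)*(n:ℂ)) * z^(n-1) := by
      funext z
      rw [deriv_const_mul _ ((differentiable_pow n).differentiableAt), deriv_pow_field]
      ring
    rw [hderiv] at hb
    intro r hr
    have h3 := hb r hr
    rw [Mp_monomial p hp _ _ r hr] at h3
    have hnorm : ‖((E:ℝ):ℂ)*(n:ℂ)‖ = E * n := by
      rw [norm_mul, Complex.norm_real, Real.norm_eq_abs, abs_of_pos hEpos,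
        Complex.norm_natCast]
    rwa [hnorm] at h3
  have hK : 0 < K := by
    obtain ⟨c₁, hc₁⟩ := hbb 1
    have hc₁' : ∀ y, c₁ ≤ φ y - ((1:ℕ):ℝ) * y := fun y => hc₁ ⟨y, rfl⟩
    have h := hb2all 1 le_rfl c₁ hc₁' 0 le_rfl
    norm_num at h
    nlinarith [Real.exp_pos c₁, wpos 0 le_rfl]
  have hder : ∀ n : ℕ, 1 ≤ n → ∀ c : ℝ, (∀ y, c ≤ φ y - (n:ℝ) * y) →
      ∀ y, Real.log n + c + ((n:ℝ)-1) * y ≤ Real.log K + φ y := by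
    intro n hn c hc y
    have h3 := hb2all n hn c hc (Real.exp y) (Real.exp_pos y).le
    have hnR : (0:ℝ) < (n:ℝ) := by exact_mod_cast hn
    have lhs : Real.exp c * (n:ℝ) * (Real.exp y)^(n-1)
        = Real.exp (Real.log (n:ℝ) + c + ((n:ℝ)-1)*y) := by
      rw [Real.exp_add, Real.exp_add, Real.exp_log hnR]
      have hp1 : (Real.exp y)^(n-1) = Real.exp (((n:ℝ)-1)*y) := by
        rw [← Real.exp_nat_mul]
        congr 1
        rw [Nat.cast_sub hn]; push_cast; ring
      rw [hp1]; ring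
    have rhs : K * w (Real.exp y) = Real.exp (Real.log K + φ y) := by
      rw [Real.exp_add, Real.exp_log hK]
      simp only [hφ]
      rw [Real.exp_log (wpos _ (Real.exp_pos y).le)]
    rw [lhs, rhs] at h3
    exact Real.exp_le_exp.mp h3
  obtain ⟨C, hC, hCle⟩ := core φ hconv hmono hbb K hK hder
  refine ⟨C, hC, ?_⟩
  intro r hr
  have h0 : (0:ℝ) < r := by linarith
  have h2 := hCle (Real.log r) (Real.log_nonneg hr)
  rw [Real.exp_log h0] at h2
  have h1 : φ (Real.log r) = Real.log (w r) := by
    simp only [hφ]; rw [Real.exp_log h0]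
  rw [h1] at h2
  exact h2

/-- for `1 ≤ p < ∞` and a log-convex weight `w` on `[0,∞)`, if
differentiation is bounded on `H_w^p(ℂ)`, then `log w(r) ≤ C r` for `r ≥ 1`. -/
theorem stmt_18 (p : ℝ) (hp : 1 ≤ p) (w : ℝ → ℝ) (hw : IsWeight ⊤ w)
    (hgrowth : (fun r : ℝ => Real.log r) =o[atTop] (fun r => Real.log (w r)))
    (hlc : LogConvexOn ⊤ w)
    (K : ℝ)
    (hbdd : ∀ f : ℂ → ℂ, Differentiable ℂ f →
      (∀ r, 0 ≤ r → Mp p f r ≤ w r) →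
      ∀ r, 0 ≤ r → Mp p (deriv f) r ≤ K * w r) :
    ∃ C > 0, ∀ r : ℝ, 1 ≤ r → Real.log (w r) ≤ C * r := by
  exact stmt_18' p hp w hw hgrowth hlc K hbdd
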